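/- arXiv:2208.10932 — 2 statements merged into one kernel-verified Lean document; each statement's English description precedes it below -/
import Mathlib

section
/- For the argumentation framework Γ = ⟨{a,b,c}, {(a,b),(b,c)}⟩ with independent argument probabilities ρ(a)=p, ρ(b)=q, ρ(c)=r ∈ [0,1], the distribution-semantics grounded probability of c, PROB(c, GR, Γ) = p·(1−q)·r, differs in general from the constellation probability PROB-C^IND(c, GR, Γ) = p·q·r + p·(1−q)·r + (1−p)·(1−q)·r; in particular there exist p,q,r ∈ [0,1] for which the two values are distinct. -/
open Finset

/-- attack relation of Γ = ⟨{a,b,c}, {(a,b),(b,c)}⟩ with a=0, b=1, c=2 -/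
def R3 (x y : Fin 3) : Prop := (x = 0 ∧ y = 1) ∨ (x = 1 ∧ y = 2)

def conflictFree {α : Type*} (R : α → α → Prop) (S : Set α) : Prop :=
  ∀ a ∈ S, ∀ b ∈ S, ¬ R a b

def complete {α : Type*} (R : α → α → Prop) (S : Set α) : Prop :=
  conflictFree R S ∧ S = {a | ∀ b, R b a → ∃ c ∈ S, R c b}

def grounded {α : Type*} (R : α → α → Prop) (S : Set α) : Prop :=
  complete R S ∧ ∀ T, complete R T → S ⊆ T

/-- restriction of `R` to the induced subgraph on `A'` -/
def restr {α : Type*} (R : α → α → Prop) (A' : Set α) (x y : α) : Prop :=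
  R x y ∧ x ∈ A' ∧ y ∈ A'

/-- the grounded extension of the subgraph of `R` induced by `A'` -/
def groundedIn {α : Type*} (R : α → α → Prop) (A' : Set α) (S : Set α) : Prop :=
  S ⊆ A' ∧ conflictFree (restr R A') S ∧
  S = {a | a ∈ A' ∧ ∀ b, restr R A' b a → ∃ c ∈ S, restr R A' c b} ∧
  ∀ T ⊆ A', (conflictFree (restr R A') T ∧
      T = {a | a ∈ A' ∧ ∀ b, restr R A' b a → ∃ c ∈ T, restr R A' c b}) → S ⊆ T

/-- weight of a set of arguments under independent labelling ρ -/
noncomputable def wt {α : Type*} [Fintype α] [DecidableEq α] (ρ : α → ℝ) (S : Finset α) : ℝ :=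
  (∏ a ∈ S, ρ a) * ∏ a ∈ Sᶜ, (1 - ρ a)

open Classical in
/-- distribution-semantics grounded probability of argument `x` -/
noncomputable def PROBgr {α : Type*} [Fintype α] [DecidableEq α] (R : α → α → Prop) (ρ : α → ℝ) (x : α) : ℝ :=
  ∑ S ∈ Finset.univ.powerset.filter (fun S : Finset α => grounded R (↑S : Set α) ∧ x ∈ S), wt ρ S

open Classical in
/-- constellation grounded probability of argument `x` under independence -/
noncomputable def PROBCgr {α : Type*} [Fintype α] [DecidableEq α] (R : α → α → Prop) (ρ : α → ℝ) (x : α) : ℝ :=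
  ∑ A' ∈ Finset.univ.powerset.filter
      (fun A' : Finset α => ∃ E : Set α, groundedIn R (↑A' : Set α) E ∧ x ∈ E), wt ρ A'

-- auxiliary lemmas

lemma fin3_cases (x : Fin 3) : x = 0 ∨ x = 1 ∨ x = 2 := by omega

lemma R3_not_0 (b : Fin 3) : ¬ R3 b 0 := by
  rintro (⟨h1, h2⟩ | ⟨h1, h2⟩) <;> exact absurd h2 (by decide)

lemma R3_iff_1 (b : Fin 3) : R3 b 1 ↔ b = 0 := by
  constructor
  · rintro (⟨h1, h2⟩ | ⟨h1, h2⟩)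
    · exact h1
    · exact absurd h2 (by decide)
  · rintro rfl; exact Or.inl ⟨rfl, rfl⟩

lemma R3_iff_2 (b : Fin 3) : R3 b 2 ↔ b = 1 := by
  constructor
  · rintro (⟨h1, h2⟩ | ⟨h1, h2⟩)
    · exact absurd h2 (by decide)
    · exact h1
  · rintro rfl; exact Or.inr ⟨rfl, rfl⟩

lemma complete_eq (S : Set (Fin 3)) (h : complete R3 S) : S = {0, 2} := by
  obtain ⟨cf, hS⟩ := h
  have h0 : (0 : Fin 3) ∈ S := by
    rw [hS]; simp only [Set.mem_setOf_eq]
    intro b hb; exact absurd hb (R3_not_0 b)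
  have h2 : (2 : Fin 3) ∈ S := by
    rw [hS]; simp only [Set.mem_setOf_eq]
    intro b hb
    rw [R3_iff_2] at hb; subst hb
    exact ⟨0, h0, (R3_iff_1 0).mpr rfl⟩
  have h1 : (1 : Fin 3) ∉ S := by
    intro hmem
    rw [hS] at hmem
    simp only [Set.mem_setOf_eq] at hmem
    obtain ⟨c, hc, hR⟩ := hmem 0 ((R3_iff_1 0).mpr rfl)
    exact R3_not_0 c hR
  ext x
  rcases fin3_cases x with rfl | rfl | rfl
  · simp [h0]
  · simp [h1]
  · simp [h2]

lemma complete_02 : complete R3 ({0, 2} : Set (Fin 3)) := by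
  constructor
  · rintro a ha b hb (⟨h1, h2⟩ | ⟨h1, h2⟩)
    · subst h2; simp at hb
    · subst h1; simp at ha
  · ext x
    simp only [Set.mem_setOf_eq]
    rcases fin3_cases x with rfl | rfl | rfl
    · constructor
      · intro _ b hb; exact absurd hb (R3_not_0 b)
      · intro _; simp
    · constructor
      · intro h; simp at h
      · intro h
        obtain ⟨c, hc, hR⟩ := h 0 ((R3_iff_1 0).mpr rfl)
        exact (R3_not_0 c hR).elim
    · constructor
      · intro _ b hb
        rw [R3_iff_2] at hb; subst hb
        exact ⟨0, by simp, (R3_iff_1 0).mpr rfl⟩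
      · intro _; simp

lemma grounded_iff (S : Set (Fin 3)) : grounded R3 S ↔ S = {0, 2} := by
  constructor
  · rintro ⟨hc, _⟩; exact complete_eq S hc
  · rintro rfl
    exact ⟨complete_02, fun T hT => by rw [complete_eq T hT]⟩

lemma restr2_false (b x : Fin 3) : ¬ restr R3 ({2} : Set (Fin 3)) b x := by
  rintro ⟨hR, hb, hx⟩
  rw [Set.mem_singleton_iff] at hb; subst hb
  rcases hR with ⟨h1, _⟩ | ⟨h1, _⟩ <;> exact absurd h1 (by decide)

lemma restr02_false (b x : Fin 3) : ¬ restr R3 ({0, 2} : Set (Fin 3)) b x := by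
  rintro ⟨hR, hb, hx⟩
  rcases hR with ⟨h1, h2⟩ | ⟨h1, h2⟩
  · subst h2; simp at hx
  · subst h1; simp at hb

lemma restr_univ (b x : Fin 3) : restr R3 Set.univ b x ↔ R3 b x :=
  ⟨fun h => h.1, fun h => ⟨h, trivial, trivial⟩⟩

lemma groundedIn_2 : groundedIn R3 ({2} : Set (Fin 3)) ({2} : Set (Fin 3)) := by
  refine ⟨le_refl _, ?_, ?_, ?_⟩
  · intro a _ b _ h; exact restr2_false a b h
  · ext x
    simp only [Set.mem_setOf_eq]
    constructor
    · intro hx; exact ⟨hx, fun b hb => (restr2_false b x hb).elim⟩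
    · rintro ⟨hx, _⟩; exact hx
  · intro T hTsub ⟨_, hTeq⟩ x hx
    rw [hTeq]
    exact ⟨hx, fun b hb => (restr2_false b x hb).elim⟩

lemma groundedIn_02 : groundedIn R3 ({0, 2} : Set (Fin 3)) ({0, 2} : Set (Fin 3)) := by
  refine ⟨le_refl _, ?_, ?_, ?_⟩
  · intro a _ b _ h; exact restr02_false a b h
  · ext x
    simp only [Set.mem_setOf_eq]
    constructor
    · intro hx; exact ⟨hx, fun b hb => (restr02_false b x hb).elim⟩
    · rintro ⟨hx, _⟩; exact hx
  · intro T hTsub ⟨_, hTeq⟩ x hx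
    rw [hTeq]
    exact ⟨hx, fun b hb => (restr02_false b x hb).elim⟩

lemma groundedIn_univ : groundedIn R3 (Set.univ : Set (Fin 3)) ({0, 2} : Set (Fin 3)) := by
  refine ⟨Set.subset_univ _, ?_, ?_, ?_⟩
  · intro a ha b hb h; exact complete_02.1 a ha b hb h.1
  · have := complete_02.2
    ext x
    simp only [Set.mem_setOf_eq, restr_univ, Set.mem_univ, true_and]
    exact Set.ext_iff.mp this x
  · intro T _ ⟨hcf, hTeq⟩
    have hcf' : conflictFree R3 T := by
      intro a ha b hb h
      exact hcf a ha b hb ((restr_univ a b).mpr h)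
    have hTeq' : T = {a | ∀ b, R3 b a → ∃ c ∈ T, R3 c b} := by
      ext x
      conv_lhs => rw [hTeq]
      simp only [Set.mem_setOf_eq, restr_univ, Set.mem_univ, true_and]
    have := complete_eq T ⟨hcf', hTeq'⟩
    rw [this]

lemma not_groundedIn_12 :
    ¬ ∃ E : Set (Fin 3), groundedIn R3 ({1, 2} : Set (Fin 3)) E ∧ (2 : Fin 3) ∈ E := by
  rintro ⟨E, ⟨hsub, hcf, heq, hmin⟩, h2⟩
  rw [heq] at h2
  simp only [Set.mem_setOf_eq] at h2
  obtain ⟨_, hdef⟩ := h2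
  have hr : restr R3 ({1, 2} : Set (Fin 3)) 1 2 :=
    ⟨Or.inr ⟨rfl, rfl⟩, by simp, by simp⟩
  obtain ⟨c, hc, hR, hcA, _⟩ := hdef 1 hr
  rw [R3_iff_1] at hR; subst hR
  simp at hcA

lemma set012_univ : ({0, 1, 2} : Set (Fin 3)) = Set.univ := by
  ext x; rcases fin3_cases x with rfl | rfl | rfl <;> simp

open Classical in
lemma filter_gr :
    Finset.univ.powerset.filter
        (fun S : Finset (Fin 3) => grounded R3 (↑S : Set (Fin 3)) ∧ (2 : Fin 3) ∈ S)
      = {({0, 2} : Finset (Fin 3))} := by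
  ext S
  simp only [Finset.mem_filter, Finset.mem_powerset, Finset.subset_univ, true_and,
    Finset.mem_singleton, grounded_iff]
  constructor
  · rintro ⟨hS, _⟩
    apply Finset.coe_injective
    rw [hS]; simp
  · rintro rfl
    constructor
    · simp
    · decide

lemma groundedIn_iff (A' : Finset (Fin 3)) :
    (∃ E : Set (Fin 3), groundedIn R3 (↑A' : Set (Fin 3)) E ∧ (2 : Fin 3) ∈ E) ↔
      (A' = {2} ∨ A' = {0, 2} ∨ A' = {0, 1, 2}) := by
  constructor
  · rintro ⟨E, hg, h2⟩
    have h2A : (2 : Fin 3) ∈ A' := by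
      have := hg.1 h2
      exact Finset.mem_coe.mp this
    by_cases h1 : (1 : Fin 3) ∈ A'
    · by_cases h0 : (0 : Fin 3) ∈ A'
      · refine Or.inr (Or.inr ?_)
        ext x; rcases fin3_cases x with rfl | rfl | rfl <;> simp [h0, h1, h2A]
      · exfalso
        have hA : (↑A' : Set (Fin 3)) = ({1, 2} : Set (Fin 3)) := by
          ext x; rcases fin3_cases x with rfl | rfl | rfl <;> simp [h0, h1, h2A]
        rw [hA] at hg
        exact not_groundedIn_12 ⟨E, hg, h2⟩
    · by_cases h0 : (0 : Fin 3) ∈ A'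
      · refine Or.inr (Or.inl ?_)
        ext x; rcases fin3_cases x with rfl | rfl | rfl <;> simp [h0, h1, h2A]
      · refine Or.inl ?_
        ext x; rcases fin3_cases x with rfl | rfl | rfl <;> simp [h0, h1, h2A]
  · rintro (rfl | rfl | rfl)
    · refine ⟨({2} : Set (Fin 3)), ?_, by simp⟩
      have : (↑({2} : Finset (Fin 3)) : Set (Fin 3)) = ({2} : Set (Fin 3)) := by simp
      rw [this]; exact groundedIn_2
    · refine ⟨({0, 2} : Set (Fin 3)), ?_, by simp⟩
      have : (↑({0, 2} : Finset (Fin 3)) : Set (Fin 3)) = ({0, 2} : Set (Fin 3)) := by simp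
      rw [this]; exact groundedIn_02
    · refine ⟨({0, 2} : Set (Fin 3)), ?_, by simp⟩
      have : (↑({0, 1, 2} : Finset (Fin 3)) : Set (Fin 3)) = Set.univ := by
        simp [← set012_univ]
      rw [this]; exact groundedIn_univ

open Classical in
lemma filter_C :
    Finset.univ.powerset.filter
        (fun A' : Finset (Fin 3) =>
          ∃ E : Set (Fin 3), groundedIn R3 (↑A' : Set (Fin 3)) E ∧ (2 : Fin 3) ∈ E)
      = ({{2}, {0, 2}, {0, 1, 2}} : Finset (Finset (Fin 3))) := by
  ext A'
  simp only [Finset.mem_filter, Finset.mem_powerset, Finset.subset_univ, true_and,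
    Finset.mem_insert, Finset.mem_singleton, groundedIn_iff]

theorem stmt_1 :
    (∀ p q r : ℝ, p ∈ Set.Icc (0:ℝ) 1 → q ∈ Set.Icc (0:ℝ) 1 → r ∈ Set.Icc (0:ℝ) 1 →
      PROBgr R3 (fun x => if x = 0 then p else if x = 1 then q else r) 2
        = p * (1 - q) * r ∧
      PROBCgr R3 (fun x => if x = 0 then p else if x = 1 then q else r) 2
        = p * q * r + p * (1 - q) * r + (1 - p) * (1 - q) * r) ∧
    (∃ p q r : ℝ, p ∈ Set.Icc (0:ℝ) 1 ∧ q ∈ Set.Icc (0:ℝ) 1 ∧ r ∈ Set.Icc (0:ℝ) 1 ∧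
      PROBgr R3 (fun x => if x = 0 then p else if x = 1 then q else r) 2
        ≠ PROBCgr R3 (fun x => if x = 0 then p else if x = 1 then q else r) 2) := by
  have main : ∀ p q r : ℝ,
      PROBgr R3 (fun x => if x = 0 then p else if x = 1 then q else r) 2
        = p * (1 - q) * r ∧
      PROBCgr R3 (fun x => if x = 0 then p else if x = 1 then q else r) 2
        = p * q * r + p * (1 - q) * r + (1 - p) * (1 - q) * r := by
    intro p q r
    set ρ : Fin 3 → ℝ := fun x => if x = 0 then p else if x = 1 then q else r with hρ
    have hρ0 : ρ 0 = p := by simp [hρ]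
    have hρ1 : ρ 1 = q := by simp [hρ]
    have hρ2 : ρ 2 = r := by simp [hρ]
    have w02 : wt ρ ({0, 2} : Finset (Fin 3)) = p * (1 - q) * r := by
      have hc : ({0, 2} : Finset (Fin 3))ᶜ = {1} := by decide
      rw [wt, hc, Finset.prod_pair (by decide : (0 : Fin 3) ≠ 2), Finset.prod_singleton,
        hρ0, hρ1, hρ2]
      ring
    have w2 : wt ρ ({2} : Finset (Fin 3)) = (1 - p) * (1 - q) * r := by
      have hc : ({2} : Finset (Fin 3))ᶜ = {0, 1} := by decide
      rw [wt, hc, Finset.prod_singleton, Finset.prod_pair (by decide : (0 : Fin 3) ≠ 1),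
        hρ0, hρ1, hρ2]
      ring
    have w012 : wt ρ ({0, 1, 2} : Finset (Fin 3)) = p * q * r := by
      have hc : ({0, 1, 2} : Finset (Fin 3))ᶜ = ∅ := by decide
      rw [wt, hc, Finset.prod_empty,
        Finset.prod_insert (by decide : (0 : Fin 3) ∉ ({1, 2} : Finset (Fin 3))),
        Finset.prod_pair (by decide : (1 : Fin 3) ≠ 2), hρ0, hρ1, hρ2]
      ring
    constructor
    · rw [PROBgr, filter_gr, Finset.sum_singleton, w02]
    · rw [PROBCgr, filter_C]
      rw [Finset.sum_insert (by decide), Finset.sum_insert (by decide),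
        Finset.sum_singleton, w2, w02, w012]
      ring
  refine ⟨fun p q r _ _ _ => main p q r, ⟨1, 1, 1, by norm_num, by norm_num, by norm_num, ?_⟩⟩
  have h := main 1 1 1
  rw [h.1, h.2]
  norm_num
end

section
/- For a finite argumentation framework Γ = ⟨A,R⟩, a set S ⊆ A is an admissible set of Γ if and only if the assignment mapping each argument a to 'true iff a ∈ S' satisfies the propositional formula ⋀_{a∈A} ( (a ⊃ ⋀_{b attacks a} ¬b) ∧ (a ⊃ ⋀_{b attacks a} ⋁_{c attacks b} c) ). -/
def acceptable {α : Type*} (R : α → α → Prop) (S : Set α) (a : α) : Prop :=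
  ∀ b, R b a → ∃ c ∈ S, R c b

def admissible {α : Type*} (R : α → α → Prop) (S : Set α) : Prop :=
  conflictFree R S ∧ ∀ a ∈ S, acceptable R S a

/-- satisfaction, by the assignment `a ↦ a ∈ S`, of the Besnard–Doutre formula
  ⋀_{a∈A} ((a ⊃ ⋀_{b attacks a} ¬b) ∧ (a ⊃ ⋀_{b attacks a} ⋁_{c attacks b} c)) -/
def satisfiesAdmFormula {α : Type*} (R : α → α → Prop) (S : Set α) : Prop :=
  ∀ a, (a ∈ S → ∀ b, R b a → b ∉ S) ∧ (a ∈ S → ∀ b, R b a → ∃ c, R c b ∧ c ∈ S)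

theorem stmt_4 {α : Type*} [Fintype α] (R : α → α → Prop) (S : Set α) :
    admissible R S ↔ satisfiesAdmFormula R S := by
  constructor
  · rintro ⟨cf, acc⟩ a
    exact ⟨fun ha b hba hb => cf b hb a ha hba,
      fun ha b hba => (acc a ha b hba).imp fun c ⟨hc, hcb⟩ => ⟨hcb, hc⟩⟩
  · intro h
    exact ⟨fun a ha b hb hab => (h b).1 hb a hab ha,
      fun a ha b hba => ((h a).2 ha b hba).imp fun c ⟨hcb, hc⟩ => ⟨hc, hcb⟩⟩
end
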